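/- Let X and Y be finite simple graphs, each with at least one edge, on n_X and n_Y vertices, with maximal degrees Δ_X, Δ_Y, minimal degrees δ_X, δ_Y, and largest Laplacian eigenvalues λ_X, λ_Y respectively. Then the independence number of the Cartesian product X □ Y satisfies α(X □ Y) ≤ n_X·n_Y·(1 − (Δ_X + Δ_Y)/(λ_X + λ_Y)) + α((X □ Y)')·((Δ_X + Δ_Y) − (δ_X + δ_Y))/((λ_X + λ_Y) − (δ_X + δ_Y)), where (X □ Y)' is the derived graph of X □ Y. -/

import Mathlib

open Finset

/-- The independence number: the largest size of a set of pairwise non-adjacent vertices. -/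
noncomputable def indepNum {V : Type*} (G : SimpleGraph V) : ℕ :=
  sSup {n | ∃ s : Finset V, (∀ v ∈ s, ∀ w ∈ s, ¬ G.Adj v w) ∧ s.card = n}

/-- The degree of a vertex: the number of its neighbours. -/
noncomputable def deg {V : Type*} (G : SimpleGraph V) (v : V) : ℕ :=
  (G.neighborSet v).ncard

/-- The minimal degree. -/
noncomputable def minDeg {V : Type*} (G : SimpleGraph V) : ℕ :=
  sInf (Set.range (deg G))

/-- The maximal degree. -/
noncomputable def maxDeg {V : Type*} (G : SimpleGraph V) : ℕ :=
  sSup (Set.range (deg G))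

/-- The largest eigenvalue of the Laplacian matrix `L = D - A`. -/
noncomputable def lapMax {V : Type*} [Fintype V] (G : SimpleGraph V) : ℝ :=
  letI := Classical.decEq V
  letI := Classical.decRel G.Adj
  ⨆ i, (SimpleGraph.posSemidef_lapMatrix ℝ G).1.eigenvalues i

/-- The derived graph: the induced subgraph on the vertices of non-maximal degree. -/
noncomputable def derived {V : Type*} (G : SimpleGraph V) :
    SimpleGraph {v : V | deg G v < maxDeg G} :=
  G.induce {v : V | deg G v < maxDeg G}


set_option linter.unusedSectionVars false
set_option maxHeartbeats 1600000

section auxA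
open Matrix RealInnerProductSpace

lemma lapMax_spec {V : Type*} [Fintype V] (G : SimpleGraph V) [DecidableEq V]
    [DecidableRel G.Adj] :
    lapMax G = ⨆ i, ((SimpleGraph.posSemidef_lapMatrix ℝ G).1).eigenvalues i := by
  unfold lapMax
  congr!

lemma matrix_rayleigh {V : Type*} [Fintype V] [DecidableEq V] (A : Matrix V V ℝ)
    (hA : A.IsHermitian) (x : V → ℝ) :
    x ⬝ᵥ (A *ᵥ x) ≤ (⨆ i, hA.eigenvalues i) * (x ⬝ᵥ x) := by
  set μ := ⨆ i, hA.eigenvalues i with hμ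
  have hle : ∀ i, hA.eigenvalues i ≤ μ := fun i =>
    le_ciSup (Set.Finite.bddAbove (Set.finite_range _)) i
  have hdiag : (μ • (1 : Matrix V V ℝ) - A) =
      (hA.eigenvectorUnitary : Matrix V V ℝ) *
        Matrix.diagonal (fun i => μ - hA.eigenvalues i) *
        (hA.eigenvectorUnitary : Matrix V V ℝ)ᴴ := by
    have hspec := hA.spectral_theorem
    have h1 : (hA.eigenvectorUnitary : Matrix V V ℝ) *
        (hA.eigenvectorUnitary : Matrix V V ℝ)ᴴ = 1 := by
      simpa [Matrix.star_eq_conjTranspose] using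
        (Matrix.mem_unitaryGroup_iff).mp hA.eigenvectorUnitary.2
    have hd : Matrix.diagonal (fun i => μ - hA.eigenvalues i) =
        μ • (1 : Matrix V V ℝ) - Matrix.diagonal (RCLike.ofReal ∘ hA.eigenvalues) := by
      ext i j
      by_cases h : i = j <;> simp [Matrix.diagonal, Matrix.one_apply, h]
    rw [hd, Matrix.mul_sub, Matrix.sub_mul, Matrix.mul_smul, Matrix.smul_mul, Matrix.mul_one, h1]
    rw [← Matrix.star_eq_conjTranspose]
    exact congrArg (fun M => μ • (1 : Matrix V V ℝ) - M) hspec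
  have hps : PosSemidef (μ • (1 : Matrix V V ℝ) - A) := by
    rw [hdiag]
    exact (Matrix.PosSemidef.diagonal (fun i => by simpa using hle i)).mul_mul_conjTranspose_same _
  have h2 := hps.dotProduct_mulVec_nonneg x
  have h3 : star x = x := by simp
  rw [h3, Matrix.sub_mulVec, Matrix.smul_mulVec, Matrix.one_mulVec, dotProduct_sub,
    dotProduct_smul] at h2
  simp only [smul_eq_mul] at h2
  linarith

lemma matrix_exists_top_vec {V : Type*} [Fintype V] [DecidableEq V] [Nonempty V]
    (A : Matrix V V ℝ) (hA : A.IsHermitian) :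
    ∃ x : V → ℝ, x ⬝ᵥ x = 1 ∧ A *ᵥ x = (⨆ i, hA.eigenvalues i) • x := by
  obtain ⟨i₀, hi₀⟩ := Finite.exists_max hA.eigenvalues
  have hsup : (⨆ i, hA.eigenvalues i) = hA.eigenvalues i₀ :=
    le_antisymm (ciSup_le hi₀) (le_ciSup (Set.Finite.bddAbove (Set.finite_range _)) i₀)
  refine ⟨⇑(hA.eigenvectorBasis i₀), ?_, ?_⟩
  · have h1 : ‖hA.eigenvectorBasis i₀‖ = 1 := hA.eigenvectorBasis.orthonormal.1 i₀
    have h2 : ⟪hA.eigenvectorBasis i₀, hA.eigenvectorBasis i₀⟫ = 1 := by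
      rw [real_inner_self_eq_norm_sq, h1]; norm_num
    rw [← h2, PiLp.inner_apply]
    simp [dotProduct, mul_comm, sq]
  · rw [hsup]
    exact hA.mulVec_eigenvectorBasis i₀

lemma key_algebra (L M u v : ℝ) (hL : 0 < L) (hLM : L ≤ M) (hu : 0 ≤ u) (hv : 0 ≤ v)
    (h : ∀ t : ℝ, (u + v*t)^2 ≤ L*u + M*v*t^2) : M*u + L*v ≤ L*M := by
  have hM : 0 < M := lt_of_lt_of_le hL hLM
  rcases eq_or_lt_of_le hv with hv0 | hvpos
  · obtain rfl : v = 0 := hv0.symm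
    have h0 := h 0
    have huL : u ≤ L := by nlinarith [h 0]
    nlinarith
  rcases eq_or_lt_of_le hu with hu0 | hupos
  · obtain rfl : u = 0 := hu0.symm
    have h1 := h 1
    have hvM : v ≤ M := by nlinarith
    nlinarith
  by_cases hvM : v < M
  · have hw : 0 < M - v := by linarith
    have ht := h (u / (M - v))
    have hne : (M - v) ≠ 0 := ne_of_gt hw
    have h1 : u + v * (u/(M-v)) = u*M/(M-v) := by field_simp; ring
    rw [h1] at ht
    have ht2 : (u*M)^2 ≤ (L*u)*(M-v)^2 + M*v*u^2 := by
      have e1 : (u*M/(M-v))^2 = (u*M)^2/(M-v)^2 := by rw [div_pow]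
      have e2 : M*v*(u/(M-v))^2 = M*v*u^2/(M-v)^2 := by rw [div_pow]; ring
      rw [e1, e2] at ht
      have hp : (0:ℝ) < (M-v)^2 := by positivity
      rw [div_le_iff₀ hp] at ht
      calc (u*M)^2 ≤ (L*u + M*v*u^2/(M-v)^2) * (M-v)^2 := ht
        _ = (L*u)*(M-v)^2 + M*v*u^2 := by field_simp
    nlinarith [ht2, mul_pos hupos hw, mul_pos hupos hupos]
  · push_neg at hvM
    exfalso
    have h1 := h 1
    nlinarith [h1, mul_pos hupos hvpos, mul_nonneg (sub_nonneg.2 hvM) hv,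
      mul_nonneg (sub_nonneg.2 hLM) hu]

end auxA

section auxB
open Matrix

lemma deg_eq_degree {V : Type*} [Fintype V] (G : SimpleGraph V) [DecidableRel G.Adj] (v : V) : deg G v = G.degree v := by
  rw [deg, SimpleGraph.degree, SimpleGraph.neighborFinset]
  exact Set.ncard_eq_toFinset_card' _

lemma deg_le_maxDeg {V : Type*} [Fintype V] (G : SimpleGraph V) (v : V) : deg G v ≤ maxDeg G :=
  le_csSup (Set.Finite.bddAbove (Set.finite_range _)) ⟨v, rfl⟩

lemma minDeg_le_deg {V : Type*} (G : SimpleGraph V) (v : V) : minDeg G ≤ deg G v := Nat.sInf_le ⟨v, rfl⟩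

lemma exists_maxDeg {V : Type*} [Fintype V] (G : SimpleGraph V) [Nonempty V] : ∃ v, deg G v = maxDeg G := by
  have h : maxDeg G ∈ Set.range (deg G) :=
    Nat.sSup_mem (Set.range_nonempty _) (Set.Finite.bddAbove (Set.finite_range _))
  exact h

lemma quad_form {V : Type*} [Fintype V] (G : SimpleGraph V) [DecidableEq V] [DecidableRel G.Adj] (x : V → ℝ) :
    x ⬝ᵥ (G.lapMatrix ℝ *ᵥ x) = (∑ i, ∑ j, if G.Adj i j then (x i - x j)^2 else 0) / 2 := by
  rw [← Matrix.toLinearMap₂'_apply', SimpleGraph.lapMatrix_toLinearMap₂']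

lemma graph_rayleigh {V : Type*} [Fintype V] (G : SimpleGraph V) [DecidableEq V] [DecidableRel G.Adj] (x : V → ℝ) :
    x ⬝ᵥ (G.lapMatrix ℝ *ᵥ x) ≤ lapMax G * (x ⬝ᵥ x) := by
  rw [lapMax_spec]
  exact matrix_rayleigh _ _ x

lemma lapMax_ge {V : Type*} [Fintype V] (G : SimpleGraph V) [DecidableEq V] [DecidableRel G.Adj] (hG : ∃ v w, G.Adj v w) : (maxDeg G : ℝ) + 1 ≤ lapMax G := by
  have : Nonempty V := ⟨hG.choose⟩
  obtain ⟨v₀, hv₀⟩ := exists_maxDeg G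
  have hd1 : 1 ≤ maxDeg G := by
    obtain ⟨v, w, hvw⟩ := hG
    have : 0 < G.degree v := by
      rw [SimpleGraph.degree_pos_iff_exists_adj]; exact ⟨w, hvw⟩
    have := deg_le_maxDeg G v
    rw [deg_eq_degree] at this
    omega
  set d : ℕ := maxDeg G with hd
  have hdeg : G.degree v₀ = d := by rw [← deg_eq_degree, hv₀]
  set x : V → ℝ := fun v => if v = v₀ then (d : ℝ) else if G.Adj v₀ v then -1 else 0 with hx
  have hsum0 : (∑ j, if G.Adj v₀ j then ((d:ℝ)+1)^2 else 0) = ((d:ℝ)+1)^2 * d := by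
    have hdd := SimpleGraph.degree_eq_sum_if_adj (R := ℝ) G v₀
    calc (∑ j, if G.Adj v₀ j then ((d:ℝ)+1)^2 else 0)
        = ∑ j, ((d:ℝ)+1)^2 * (if G.Adj v₀ j then (1:ℝ) else 0) := by simp [mul_ite]
      _ = ((d:ℝ)+1)^2 * (G.degree v₀ : ℝ) := by rw [← Finset.mul_sum, ← hdd]
      _ = ((d:ℝ)+1)^2 * d := by rw [hdeg]
  have key : ∀ i j, (if G.Adj i j then (if i = v₀ then ((d:ℝ)+1)^2 else 0) else 0)
      + (if G.Adj i j then (if j = v₀ then ((d:ℝ)+1)^2 else 0) else 0)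
      ≤ (if G.Adj i j then (x i - x j)^2 else 0) := by
    intro i j
    by_cases hij : G.Adj i j
    · simp only [hij, if_true]
      by_cases hi : i = v₀
      · have hj : j ≠ v₀ := by rintro rfl; exact G.irrefl (hi ▸ hij)
        have hxj : x j = -1 := by
          simp only [hx, hj, if_false, if_neg hj]
          rw [if_pos (hi ▸ hij)]
        have hxi : x i = d := by simp [hx, hi]
        rw [hxi, hxj, if_pos hi, if_neg hj]
        ring_nf
        nlinarith [sq_nonneg ((d:ℝ)+1)]
      · by_cases hj : j = v₀
        · have hxj : x j = d := by simp [hx, hj]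
          have hxi : x i = -1 := by
            simp only [hx, if_neg hi]
            rw [if_pos]
            exact (hj ▸ hij).symm
          rw [hxi, hxj, if_neg hi, if_pos hj]
          nlinarith [sq_nonneg ((d:ℝ)+1)]
        · rw [if_neg hi, if_neg hj]
          simp
          positivity
    · simp [hij]
  have hsum : (2:ℝ) * (d * ((d:ℝ)+1)^2) ≤ ∑ i, ∑ j, if G.Adj i j then (x i - x j)^2 else 0 := by
    have h1 : ∑ i, ∑ j, (if G.Adj i j then (if i = v₀ then ((d:ℝ)+1)^2 else 0) else 0)
        = d * ((d:ℝ)+1)^2 := by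
      have h1a : ∀ i, (∑ j, if G.Adj i j then (if i = v₀ then ((d:ℝ)+1)^2 else 0) else 0)
          = if i = v₀ then (∑ j, if G.Adj v₀ j then ((d:ℝ)+1)^2 else 0) else 0 := by
        intro i
        by_cases hi : i = v₀ <;> simp [hi]
      simp_rw [h1a]
      rw [Finset.sum_ite_eq' Finset.univ v₀]
      simp only [Finset.mem_univ, if_true]
      rw [hsum0]; ring
    have h2 : ∑ i, ∑ j, (if G.Adj i j then (if j = v₀ then ((d:ℝ)+1)^2 else 0) else 0)
        = d * ((d:ℝ)+1)^2 := by
      rw [Finset.sum_comm]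
      have h2a : ∀ j, (∑ i, if G.Adj i j then (if j = v₀ then ((d:ℝ)+1)^2 else 0) else 0)
          = if j = v₀ then (∑ i, if G.Adj v₀ i then ((d:ℝ)+1)^2 else 0) else 0 := by
        intro j
        by_cases hj : j = v₀ <;> simp [hj, G.adj_comm]
      simp_rw [h2a]
      rw [Finset.sum_ite_eq' Finset.univ v₀]
      simp only [Finset.mem_univ, if_true]
      rw [hsum0]; ring
    calc (2:ℝ) * (d * ((d:ℝ)+1)^2)
        = ∑ i, ∑ j, ((if G.Adj i j then (if i = v₀ then ((d:ℝ)+1)^2 else 0) else 0)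
          + (if G.Adj i j then (if j = v₀ then ((d:ℝ)+1)^2 else 0) else 0)) := by
          simp_rw [Finset.sum_add_distrib]
          rw [h1, h2]; ring
      _ ≤ _ := Finset.sum_le_sum fun i _ => Finset.sum_le_sum fun j _ => key i j
  have hxx : x ⬝ᵥ x = (d:ℝ)^2 + d := by
    have hpt : ∀ v, x v * x v
        = (if v = v₀ then ((d:ℝ))^2 else 0) + (if G.Adj v₀ v then 1 else 0) := by
      intro v
      by_cases hv : v = v₀
      · simp [hx, hv, sq]
      · by_cases ha : G.Adj v₀ v <;> simp [hx, hv, ha]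
    rw [dotProduct]
    simp_rw [hpt]
    rw [Finset.sum_add_distrib, Finset.sum_ite_eq' Finset.univ v₀]
    have hdd := SimpleGraph.degree_eq_sum_if_adj (R := ℝ) G v₀
    rw [← hdd, hdeg]
    simp
  have hq := quad_form G x
  have hray := graph_rayleigh G x
  rw [hq, hxx] at hray
  have hd1' : (1:ℝ) ≤ d := by exact_mod_cast hd1
  nlinarith [hray, hsum, hd1']

end auxB

section auxC
open Matrix

lemma exists_minDeg {V : Type*} [Fintype V] (G : SimpleGraph V) [Nonempty V] :
    ∃ v, deg G v = minDeg G := by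
  have h : minDeg G ∈ Set.range (deg G) := Nat.sInf_mem (Set.range_nonempty _)
  exact h

variable {V W : Type*} [Fintype V] [Fintype W] (X : SimpleGraph V) (Y : SimpleGraph W)
lemma deg_boxProd (p : V × W) : deg (X.boxProd Y) p = deg X p.1 + deg Y p.2 := by
  classical
  rw [deg_eq_degree, deg_eq_degree, deg_eq_degree, SimpleGraph.degree_boxProd]

lemma maxDeg_boxProd [Nonempty V] [Nonempty W] :
    maxDeg (X.boxProd Y) = maxDeg X + maxDeg Y := by
  apply le_antisymm
  · obtain ⟨p, hp⟩ := exists_maxDeg (X.boxProd Y)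
    rw [← hp, deg_boxProd]
    exact add_le_add (deg_le_maxDeg X p.1) (deg_le_maxDeg Y p.2)
  · obtain ⟨a, ha⟩ := exists_maxDeg X
    obtain ⟨b, hb⟩ := exists_maxDeg Y
    have := deg_le_maxDeg (X.boxProd Y) (a, b)
    rwa [deg_boxProd, ha, hb] at this

lemma minDeg_boxProd [Nonempty V] [Nonempty W] :
    minDeg (X.boxProd Y) = minDeg X + minDeg Y := by
  apply le_antisymm
  · obtain ⟨a, ha⟩ := exists_minDeg X
    obtain ⟨b, hb⟩ := exists_minDeg Y
    have := minDeg_le_deg (X.boxProd Y) (a, b)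
    rwa [deg_boxProd, ha, hb] at this
  · obtain ⟨p, hp⟩ := exists_minDeg (X.boxProd Y)
    rw [← hp, deg_boxProd]
    exact add_le_add (minDeg_le_deg X p.1) (minDeg_le_deg Y p.2)

section quad
variable [DecidableEq V] [DecidableEq W] [DecidableRel X.Adj] [DecidableRel Y.Adj]
  [DecidableRel (X.boxProd Y).Adj]

lemma quad_boxProd (z : V × W → ℝ) :
    z ⬝ᵥ ((X.boxProd Y).lapMatrix ℝ *ᵥ z) =
      (∑ b, (fun a => z (a, b)) ⬝ᵥ (X.lapMatrix ℝ *ᵥ (fun a => z (a, b))))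
      + ∑ a, (fun b => z (a, b)) ⬝ᵥ (Y.lapMatrix ℝ *ᵥ (fun b => z (a, b))) := by
  have split : ∀ p q : V × W, (if (X.boxProd Y).Adj p q then (z p - z q)^2 else 0)
      = (if X.Adj p.1 q.1 ∧ p.2 = q.2 then (z p - z q)^2 else 0)
      + (if Y.Adj p.2 q.2 ∧ p.1 = q.1 then (z p - z q)^2 else 0) := by
    intro p q
    by_cases h1 : X.Adj p.1 q.1 ∧ p.2 = q.2
    · have h2 : ¬ (Y.Adj p.2 q.2 ∧ p.1 = q.1) := by
        rintro ⟨-, h⟩; exact X.irrefl (h ▸ h1.1)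
      simp [SimpleGraph.boxProd_adj, h1, h2]
    · by_cases h2 : Y.Adj p.2 q.2 ∧ p.1 = q.1 <;>
        simp [SimpleGraph.boxProd_adj, h1, h2]
  have hA : (∑ p : V × W, ∑ q : V × W, if X.Adj p.1 q.1 ∧ p.2 = q.2 then (z p - z q)^2 else 0)
      = ∑ b, ∑ a, ∑ c, (if X.Adj a c then (z (a, b) - z (c, b))^2 else 0) := by
    rw [Fintype.sum_prod_type]
    simp_rw [Fintype.sum_prod_type]
    have h1 : ∀ (a : V) (b : W) (c : V),
        (∑ d, if X.Adj a c ∧ b = d then (z (a, b) - z (c, d))^2 else 0)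
        = if X.Adj a c then (z (a, b) - z (c, b))^2 else 0 := by
      intro a b c
      by_cases h : X.Adj a c
      · simp only [h, true_and]
        rw [Finset.sum_ite_eq Finset.univ b]
        simp
      · simp [h]
    simp_rw [h1]
    rw [Finset.sum_comm]
  have hB : (∑ p : V × W, ∑ q : V × W, if Y.Adj p.2 q.2 ∧ p.1 = q.1 then (z p - z q)^2 else 0)
      = ∑ a, ∑ b, ∑ d, (if Y.Adj b d then (z (a, b) - z (a, d))^2 else 0) := by
    rw [Fintype.sum_prod_type]
    simp_rw [Fintype.sum_prod_type]
    have h1 : ∀ (a : V) (b : W),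
        (∑ c, ∑ d, if Y.Adj b d ∧ a = c then (z (a, b) - z (c, d))^2 else 0)
        = ∑ d, if Y.Adj b d then (z (a, b) - z (a, d))^2 else 0 := by
      intro a b
      rw [Finset.sum_comm]
      apply Finset.sum_congr rfl
      intro d _
      by_cases h : Y.Adj b d
      · simp only [h, true_and]
        rw [Finset.sum_ite_eq Finset.univ a]
        simp
      · simp [h]
    simp_rw [h1]
  rw [quad_form]
  simp_rw [quad_form]
  simp_rw [split]
  simp_rw [Finset.sum_add_distrib]
  rw [hA, hB, ← Finset.sum_div, ← Finset.sum_div]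
  ring

lemma col_dot (z : V × W → ℝ) :
    (∑ b, (fun a => z (a, b)) ⬝ᵥ (fun a => z (a, b))) = z ⬝ᵥ z := by
  simp only [dotProduct]
  rw [Fintype.sum_prod_type, Finset.sum_comm]

lemma row_dot (z : V × W → ℝ) :
    (∑ a, (fun b => z (a, b)) ⬝ᵥ (fun b => z (a, b))) = z ⬝ᵥ z := by
  simp only [dotProduct]
  rw [Fintype.sum_prod_type]

lemma lapMax_boxProd' [Nonempty V] [Nonempty W] :
    lapMax (X.boxProd Y) = lapMax X + lapMax Y := by
  apply le_antisymm
  · -- upper bound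
    have hherm := (SimpleGraph.posSemidef_lapMatrix ℝ (X.boxProd Y)).1
    obtain ⟨z, hz1, hz2⟩ := matrix_exists_top_vec _ hherm
    have hval : lapMax (X.boxProd Y) = z ⬝ᵥ ((X.boxProd Y).lapMatrix ℝ *ᵥ z) := by
      rw [lapMax_spec, hz2, dotProduct_smul, smul_eq_mul, hz1, mul_one]
    rw [hval, quad_boxProd]
    have hcols : (∑ b, (fun a => z (a, b)) ⬝ᵥ (X.lapMatrix ℝ *ᵥ (fun a => z (a, b))))
        ≤ lapMax X := by
      calc (∑ b, (fun a => z (a, b)) ⬝ᵥ (X.lapMatrix ℝ *ᵥ (fun a => z (a, b))))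
          ≤ ∑ b, lapMax X * ((fun a => z (a, b)) ⬝ᵥ (fun a => z (a, b))) :=
            Finset.sum_le_sum fun b _ => graph_rayleigh X _
        _ = lapMax X * (z ⬝ᵥ z) := by rw [← Finset.mul_sum, col_dot]
        _ = lapMax X := by rw [hz1, mul_one]
    have hrows : (∑ a, (fun b => z (a, b)) ⬝ᵥ (Y.lapMatrix ℝ *ᵥ (fun b => z (a, b))))
        ≤ lapMax Y := by
      calc (∑ a, (fun b => z (a, b)) ⬝ᵥ (Y.lapMatrix ℝ *ᵥ (fun b => z (a, b))))
          ≤ ∑ a, lapMax Y * ((fun b => z (a, b)) ⬝ᵥ (fun b => z (a, b))) :=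
            Finset.sum_le_sum fun a _ => graph_rayleigh Y _
        _ = lapMax Y * (z ⬝ᵥ z) := by rw [← Finset.mul_sum, row_dot]
        _ = lapMax Y := by rw [hz1, mul_one]
    linarith
  · -- lower bound
    obtain ⟨f, hf1, hf2⟩ := matrix_exists_top_vec _ (SimpleGraph.posSemidef_lapMatrix ℝ X).1
    obtain ⟨g, hg1, hg2⟩ := matrix_exists_top_vec _ (SimpleGraph.posSemidef_lapMatrix ℝ Y).1
    rw [← lapMax_spec] at hf2 hg2
    set z : V × W → ℝ := fun p => g p.2 * f p.1 with hzdef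
    have hcol : ∀ b, (fun a => z (a, b)) = (g b) • f := by
      intro b; funext a; simp [hzdef]
    have hrow : ∀ a, (fun b => z (a, b)) = (f a) • g := by
      intro a; funext b; simp [hzdef, mul_comm]
    have hzz : z ⬝ᵥ z = 1 := by
      simp only [dotProduct]
      rw [Fintype.sum_prod_type]
      have : ∀ a : V, (∑ b, z (a, b) * z (a, b)) = (f a * f a) * ∑ b, g b * g b := by
        intro a
        rw [Finset.mul_sum]
        apply Finset.sum_congr rfl
        intro b _
        simp [hzdef]; ring
      simp_rw [this]
      rw [← Finset.sum_mul]
      have hf1' : (∑ a, f a * f a) = 1 := hf1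
      have hg1' : (∑ b, g b * g b) = 1 := hg1
      rw [hf1', hg1', one_mul]
    have hform : z ⬝ᵥ ((X.boxProd Y).lapMatrix ℝ *ᵥ z) = lapMax X + lapMax Y := by
      rw [quad_boxProd]
      have h1 : ∀ b : W, (fun a => z (a, b)) ⬝ᵥ (X.lapMatrix ℝ *ᵥ (fun a => z (a, b)))
          = (g b * g b) * lapMax X := by
        intro b
        rw [hcol b, Matrix.mulVec_smul, dotProduct_smul, smul_dotProduct, hf2, dotProduct_smul]
        simp only [smul_eq_mul]
        rw [hf1]
        ring
      have h2 : ∀ a : V, (fun b => z (a, b)) ⬝ᵥ (Y.lapMatrix ℝ *ᵥ (fun b => z (a, b)))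
          = (f a * f a) * lapMax Y := by
        intro a
        rw [hrow a, Matrix.mulVec_smul, dotProduct_smul, smul_dotProduct, hg2, dotProduct_smul]
        simp only [smul_eq_mul]
        rw [hg1]
        ring
      simp_rw [h1, h2]
      rw [← Finset.sum_mul, ← Finset.sum_mul]
      have hf1' : (∑ a, f a * f a) = 1 := hf1
      have hg1' : (∑ b, g b * g b) = 1 := hg1
      rw [hf1', hg1', one_mul, one_mul]
    have := graph_rayleigh (X.boxProd Y) z
    rw [hform, hzz, mul_one] at this
    exact this

end quad
end auxC

section auxD
open Matrix

section indep
variable {V : Type*} [Finite V] (G : SimpleGraph V)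

lemma indepNum_bddAbove :
    BddAbove {n | ∃ s : Finset V, (∀ v ∈ s, ∀ w ∈ s, ¬ G.Adj v w) ∧ s.card = n} := by
  cases nonempty_fintype V
  exact ⟨Fintype.card V, fun n ⟨s, _, hc⟩ => hc ▸ Finset.card_le_univ s⟩

lemma indepNum_spec :
    ∃ s : Finset V, (∀ v ∈ s, ∀ w ∈ s, ¬ G.Adj v w) ∧ s.card = indepNum G :=
 by
  have h0 : (0:ℕ) ∈ {n | ∃ s : Finset V, (∀ v ∈ s, ∀ w ∈ s, ¬ G.Adj v w) ∧ s.card = n} :=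
    ⟨∅, fun v hv => absurd hv (by simp), by simp⟩
  exact Nat.sSup_mem ⟨0, h0⟩ (indepNum_bddAbove G)

lemma le_indepNum (s : Finset V) (h : ∀ v ∈ s, ∀ w ∈ s, ¬ G.Adj v w) :
    s.card ≤ indepNum G :=
  le_csSup (indepNum_bddAbove G) ⟨s, h, rfl⟩

end indep


set_option maxHeartbeats 1600000 in
theorem relative_bound_general {V : Type*} [Fintype V] (G : SimpleGraph V)
    [DecidableEq V] [DecidableRel G.Adj] (hG : ∃ v w, G.Adj v w) :
    (indepNum G : ℝ) ≤ (Fintype.card V : ℝ) * (1 - (maxDeg G : ℝ) / lapMax G)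
      + (indepNum (derived G) : ℝ) * ((maxDeg G : ℝ) - (minDeg G : ℝ))
        / (lapMax G - (minDeg G : ℝ)) := by
  have hVne : Nonempty V := ⟨hG.choose⟩
  have : Finite {v : V | deg G v < maxDeg G} := Subtype.finite
  set n : ℝ := (Fintype.card V : ℝ) with hn
  have hnpos : 0 < n := by rw [hn]; exact_mod_cast Fintype.card_pos
  set Δr : ℝ := (maxDeg G : ℝ) with hΔr
  set δr : ℝ := (minDeg G : ℝ) with hδr
  set lam : ℝ := lapMax G with hlamdef
  have hδΔ : δr ≤ Δr := by
    obtain ⟨v⟩ := hVne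
    have h1 := minDeg_le_deg G v
    have h2 := deg_le_maxDeg G v
    rw [hδr, hΔr]
    exact_mod_cast le_trans h1 h2
  have hδ0 : (0:ℝ) ≤ δr := by rw [hδr]; positivity
  have hlam : Δr + 1 ≤ lam := lapMax_ge G hG
  have hlampos : 0 < lam := by
    have : (0:ℝ) ≤ Δr := by rw [hΔr]; positivity
    linarith
  obtain ⟨S, hSi, hSc⟩ := indepNum_spec G
  set S₁ : Finset V := S.filter (fun v => deg G v = maxDeg G) with hS₁
  set S₂ : Finset V := S.filter (fun v => ¬ deg G v = maxDeg G) with hS₂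
  set s₁ : ℝ := (S₁.card : ℝ) with hs₁
  set s₂ : ℝ := (S₂.card : ℝ) with hs₂
  have hs₁0 : 0 ≤ s₁ := by rw [hs₁]; positivity
  have hs₂0 : 0 ≤ s₂ := by rw [hs₂]; positivity
  have hsplit : s₁ + s₂ = (indepNum G : ℝ) := by
    rw [hs₁, hs₂, ← hSc]
    exact_mod_cast congrArg (Nat.cast (R := ℝ)) (Finset.card_filter_add_card_filter_not
      (s := S) (p := fun v => deg G v = maxDeg G))
  have hs₂le : (S₂.card : ℕ) ≤ indepNum (derived G) := by
    classical
    set p : V → Prop := fun v => v ∈ {v : V | deg G v < maxDeg G} with hp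
    have hpd : DecidablePred p := fun v => decidable_of_iff (deg G v < maxDeg G) Iff.rfl
    set T : Finset {v : V | deg G v < maxDeg G} := @Finset.subtype V p hpd S₂ with hT
    have hTcard : T.card = S₂.card := by
      rw [hT, Finset.card_subtype]
      congr 1
      apply Finset.filter_true_of_mem
      intro v hv
      rw [hS₂, Finset.mem_filter] at hv
      exact lt_of_le_of_ne (deg_le_maxDeg G v) hv.2
    have hTind : ∀ v ∈ T, ∀ w ∈ T, ¬ (derived G).Adj v w := by
      intro v hv w hw hadj
      rw [hT, Finset.mem_subtype] at hv hw
      exact hSi _ (Finset.mem_of_mem_filter _ hv) _ (Finset.mem_of_mem_filter _ hw) hadj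
    rw [← hTcard]
    exact le_indepNum (derived G) T hTind
  have hdisj : ∀ v, v ∈ S₁ → v ∉ S₂ := by
    intro v h1 h2
    rw [hS₁, Finset.mem_filter] at h1
    rw [hS₂, Finset.mem_filter] at h2
    exact h2.2 h1.2
  have key : ∀ t : ℝ, lam * ((s₁ + t*s₂)^2) / n ≤ (lam - Δr)*s₁ + ((lam - δr)*s₂)*t^2 := by
    intro t
    set y : V → ℝ := fun v => (if v ∈ S₁ then 1 else 0) + t * (if v ∈ S₂ then 1 else 0) with hy
    set c : ℝ := (s₁ + t*s₂)/n with hc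
    set x : V → ℝ := fun v => y v - c with hxd
    have hynotS : ∀ v, v ∉ S → y v = 0 := by
      intro v hv
      have h1 : v ∉ S₁ := fun h => hv (Finset.mem_of_mem_filter _ h)
      have h2 : v ∉ S₂ := fun h => hv (Finset.mem_of_mem_filter _ h)
      simp [hy, h1, h2]
    have hy2 : ∀ v, y v * y v
        = (if v ∈ S₁ then 1 else 0) + t^2 * (if v ∈ S₂ then 1 else 0) := by
      intro v
      by_cases h1 : v ∈ S₁
      · have h2 : v ∉ S₂ := hdisj v h1
        simp [hy, h1, h2]
      · by_cases h2 : v ∈ S₂ <;> simp [hy, h1, h2] <;> ring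
    have hsum1 : (∑ v, (if v ∈ S₁ then (1:ℝ) else 0)) = s₁ := by
      rw [Finset.sum_ite_mem, Finset.univ_inter, Finset.sum_const, nsmul_eq_mul, mul_one, hs₁]
    have hsum2 : (∑ v, (if v ∈ S₂ then (1:ℝ) else 0)) = s₂ := by
      rw [Finset.sum_ite_mem, Finset.univ_inter, Finset.sum_const, nsmul_eq_mul, mul_one, hs₂]
    have hsy : (∑ v, y v) = s₁ + t*s₂ := by
      simp only [hy]
      rw [Finset.sum_add_distrib, ← Finset.mul_sum, hsum1, hsum2]
    have hsy2 : (∑ v, y v * y v) = s₁ + t^2*s₂ := by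
      simp_rw [hy2]
      rw [Finset.sum_add_distrib, ← Finset.mul_sum, hsum1, hsum2]
    have hqf : Δr*s₁ + (δr*s₂)*t^2 ≤ x ⬝ᵥ (G.lapMatrix ℝ *ᵥ x) := by
      rw [quad_form]
      have hstep : (∑ i, ∑ j, if G.Adj i j then (x i - x j)^2 else 0)
          = ∑ i, ∑ j, if G.Adj i j then (y i - y j)^2 else 0 := by
        apply Finset.sum_congr rfl; intro i _
        apply Finset.sum_congr rfl; intro j _
        have : x i - x j = y i - y j := by simp [hxd]
        rw [this]
      rw [hstep]
      have hyedge : ∀ i j, G.Adj i j → (y i - y j)^2 = y i * y i + y j * y j := by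
        intro i j hij
        have hz : y i * y j = 0 := by
          by_cases hi : i ∈ S
          · by_cases hj : j ∈ S
            · exact absurd hij (hSi i hi j hj)
            · rw [hynotS j hj, mul_zero]
          · rw [hynotS i hi, zero_mul]
        linear_combination (-2 : ℝ) * hz
      have hstep2 : (∑ i, ∑ j, if G.Adj i j then (y i - y j)^2 else 0)
          = 2 * ∑ v, (G.degree v : ℝ) * (y v * y v) := by
        have h1 : ∀ i j, (if G.Adj i j then (y i - y j)^2 else 0)
            = (if G.Adj i j then y i * y i else 0) + (if G.Adj i j then y j * y j else 0) := by
          intro i j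
          by_cases h : G.Adj i j
          · simp only [h, if_true]; exact hyedge i j h
          · simp [h]
        simp_rw [h1, Finset.sum_add_distrib]
        have h2 : (∑ i, ∑ j, if G.Adj i j then y i * y i else 0)
            = ∑ v, (G.degree v : ℝ) * (y v * y v) := by
          apply Finset.sum_congr rfl; intro i _
          rw [SimpleGraph.degree_eq_sum_if_adj (R := ℝ) G, Finset.sum_mul]
          apply Finset.sum_congr rfl; intro j _
          by_cases h : G.Adj i j <;> simp [h]
        have h3 : (∑ i, ∑ j, if G.Adj i j then y j * y j else 0)
            = ∑ v, (G.degree v : ℝ) * (y v * y v) := by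
          rw [Finset.sum_comm]
          apply Finset.sum_congr rfl; intro j _
          rw [SimpleGraph.degree_eq_sum_if_adj (R := ℝ) G, Finset.sum_mul]
          apply Finset.sum_congr rfl; intro i _
          by_cases h : G.Adj i j
          · have h' : G.Adj j i := h.symm
            simp [h, h']
          · have h' : ¬ G.Adj j i := fun hji => h hji.symm
            simp [h, h']
        rw [h2, h3]; ring
      rw [hstep2]
      have hdegval : (∑ v, (G.degree v : ℝ) * (y v * y v))
          = (∑ v ∈ S₁, (G.degree v : ℝ)) + t^2 * ∑ v ∈ S₂, (G.degree v : ℝ) := by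
        have hpt : ∀ v, (G.degree v : ℝ) * (y v * y v)
            = (if v ∈ S₁ then (G.degree v : ℝ) else 0)
              + t^2 * (if v ∈ S₂ then (G.degree v : ℝ) else 0) := by
          intro v
          rw [hy2 v]
          by_cases h1 : v ∈ S₁ <;> by_cases h2 : v ∈ S₂ <;> simp [h1, h2] <;> ring
        simp_rw [hpt]
        rw [Finset.sum_add_distrib, ← Finset.mul_sum, Finset.sum_ite_mem, Finset.univ_inter,
          Finset.sum_ite_mem, Finset.univ_inter]
      rw [hdegval]
      have hA : (∑ v ∈ S₁, (G.degree v : ℝ)) = Δr * s₁ := by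
        have hconst : ∀ v ∈ S₁, (G.degree v : ℝ) = Δr := by
          intro v hv
          rw [hS₁, Finset.mem_filter] at hv
          rw [← deg_eq_degree, hv.2, hΔr]
        rw [Finset.sum_congr rfl hconst, Finset.sum_const, nsmul_eq_mul, hs₁]
        ring
      have hB : δr * s₂ ≤ ∑ v ∈ S₂, (G.degree v : ℝ) := by
        calc δr * s₂ = ∑ _v ∈ S₂, δr := by rw [Finset.sum_const, nsmul_eq_mul, hs₂]; ring
          _ ≤ _ := Finset.sum_le_sum fun v _ => by
              rw [hδr, ← deg_eq_degree]
              exact_mod_cast minDeg_le_deg G v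
      rw [hA]
      nlinarith [hB, sq_nonneg t]
    have hxx : x ⬝ᵥ x = s₁ + t^2*s₂ - (s₁ + t*s₂)^2/n := by
      have hdot : x ⬝ᵥ x = (∑ v, y v * y v) - 2*c*(∑ v, y v) + n*c^2 := by
        simp only [dotProduct, hxd]
        have hterm : ∀ v, (y v - c)*(y v - c) = y v * y v - 2*c*(y v) + c^2 := fun v => by ring
        simp_rw [hterm]
        rw [Finset.sum_add_distrib, Finset.sum_sub_distrib, ← Finset.mul_sum,
          Finset.sum_const, Finset.card_univ, nsmul_eq_mul]
      rw [hdot, hsy, hsy2, hc]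
      field_simp
      ring
    have hray := graph_rayleigh G x
    rw [hxx] at hray
    have hchain := le_trans hqf hray
    have hexp : lam * (s₁ + t^2*s₂ - (s₁ + t*s₂)^2/n)
        = lam*s₁ + lam*s₂*t^2 - lam*((s₁ + t*s₂)^2)/n := by ring
    rw [hexp] at hchain
    linarith [hchain]
  -- translate to normalized variables
  set u : ℝ := lam * s₁ / n with hu
  set v : ℝ := lam * s₂ / n with hv
  have hu0 : 0 ≤ u := by rw [hu]; positivity
  have hv0 : 0 ≤ v := by rw [hv]; positivity
  have hL : 0 < lam - Δr := by linarith
  have hLM : lam - Δr ≤ lam - δr := by linarith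
  have key2 : ∀ t : ℝ, (u + v*t)^2 ≤ (lam - Δr)*u + (lam - δr)*v*t^2 := by
    intro t
    have h := key t
    have hml := mul_le_mul_of_nonneg_left h (le_of_lt (div_pos hlampos hnpos))
    have e1 : lam/n * (lam * ((s₁ + t*s₂)^2) / n) = (u + v*t)^2 := by
      rw [hu, hv]; field_simp
    have e2 : lam/n * ((lam - Δr)*s₁ + ((lam - δr)*s₂)*t^2)
        = (lam - Δr)*u + (lam - δr)*v*t^2 := by
      rw [hu, hv]; field_simp
    rw [e1, e2] at hml
    exact hml
  have key3 : (lam - δr)*u + (lam - Δr)*v ≤ (lam - Δr)*(lam - δr) :=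
    key_algebra _ _ _ _ hL hLM hu0 hv0 key2
  -- final assembly
  rw [← hsplit]
  have hα : s₂ ≤ (indepNum (derived G) : ℝ) := by
    rw [hs₂]; exact_mod_cast hs₂le
  have hMpos : 0 < lam - δr := lt_of_lt_of_le hL hLM
  have h1 : s₁ + s₂ ≤ n * (1 - Δr/lam) + s₂ * (Δr - δr) / (lam - δr) := by
    have expand : n * (1 - Δr/lam) + s₂ * (Δr - δr) / (lam - δr) - (s₁ + s₂)
        = (n/(lam*(lam - δr)))
          * ((lam - Δr)*(lam - δr) - ((lam - δr)*u + (lam - Δr)*v)) := by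
      rw [hu, hv]
      field_simp
      ring
    have hnonneg : 0 ≤ n * (1 - Δr/lam) + s₂ * (Δr - δr) / (lam - δr) - (s₁ + s₂) := by
      rw [expand]
      apply mul_nonneg
      · positivity
      · linarith
    linarith
  have h2 : s₂ * (Δr - δr) / (lam - δr) ≤ (indepNum (derived G) : ℝ) * (Δr - δr) / (lam - δr) := by
    exact (div_le_div_iff_of_pos_right hMpos).mpr (mul_le_mul_of_nonneg_right hα (by linarith))
  linarith


end auxD

/-- The relative bound for a Cartesian product `X □ Y`:
`α(X □ Y) ≤ n_X n_Y (1 - (Δ_X + Δ_Y)/(λ_X + λ_Y))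
  + α((X □ Y)') ((Δ_X + Δ_Y) - (δ_X + δ_Y)) / ((λ_X + λ_Y) - (δ_X + δ_Y))`. -/
theorem relative_bound_boxProd {V W : Type*} [Fintype V] [Fintype W]
    (X : SimpleGraph V) (Y : SimpleGraph W)
    (hX : ∃ v w, X.Adj v w) (hY : ∃ v w, Y.Adj v w) :
    (indepNum (X.boxProd Y) : ℝ)
      ≤ (Fintype.card V : ℝ) * (Fintype.card W : ℝ)
          * (1 - ((maxDeg X : ℝ) + (maxDeg Y : ℝ)) / (lapMax X + lapMax Y))
        + (indepNum (derived (X.boxProd Y)) : ℝ)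
          * (((maxDeg X : ℝ) + (maxDeg Y : ℝ)) - ((minDeg X : ℝ) + (minDeg Y : ℝ)))
          / ((lapMax X + lapMax Y) - ((minDeg X : ℝ) + (minDeg Y : ℝ))) := by
  classical
  obtain ⟨v1, v2, hXe⟩ := hX
  obtain ⟨w1, w2, hYe⟩ := hY
  have hVne : Nonempty V := ⟨v1⟩
  have hWne : Nonempty W := ⟨w1⟩
  have hbox : ∃ p q, (X.boxProd Y).Adj p q :=
    ⟨(v1, w1), (v2, w1), by rw [SimpleGraph.boxProd_adj]; left; exact ⟨hXe, rfl⟩⟩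
  have h := relative_bound_general (X.boxProd Y) hbox
  have e1 : ((maxDeg (X.boxProd Y) : ℕ) : ℝ) = (maxDeg X : ℝ) + (maxDeg Y : ℝ) := by
    rw [maxDeg_boxProd]; push_cast; ring
  have e2 : ((minDeg (X.boxProd Y) : ℕ) : ℝ) = (minDeg X : ℝ) + (minDeg Y : ℝ) := by
    rw [minDeg_boxProd]; push_cast; ring
  have e3 : lapMax (X.boxProd Y) = lapMax X + lapMax Y := lapMax_boxProd' X Y
  have e4 : ((Fintype.card (V × W) : ℕ) : ℝ) = (Fintype.card V : ℝ) * (Fintype.card W : ℝ) := by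
    rw [Fintype.card_prod]; push_cast; ring
  rw [e1, e2, e3, e4] at h
  exact h
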